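/- arXiv:1601.01974 — 6 statements merged into one kernel-verified Lean document; each statement's English description precedes it below -/
import Mathlib

section
/- For any nonnegative reals C, a_1, ..., a_T, the sum over t from 1 to T of min(a_t^2 / sqrt(sum_{i=1}^{t-1} a_i^2), C * a_t) is at most 3.5 * C * max_t a_t + 3.5 * sqrt(sum_{t=1}^T a_t^2). (Terms with zero denominator are interpreted via the min with C*a_t, i.e., when sum_{i<t} a_i^2 = 0 the term is bounded by C*a_t.) -/
open Finset

/-- Useful Inequality (Lemma 1): for nonnegative `C, a_1, ..., a_T`,
`∑_t min(a_t² / √(∑_{i<t} a_i²), C·a_t) ≤ 3.5·C·max_t a_t + 3.5·√(∑_t a_t²)`,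
where a term with zero denominator is interpreted as `C·a_t`. -/
theorem useful_inequality (T : ℕ) (hT : 0 < T) (C : ℝ) (hC : 0 ≤ C)
    (a : ℕ → ℝ) (ha : ∀ t, 0 ≤ a t) :
    ∑ t ∈ Finset.range T,
      (if (∑ i ∈ Finset.range t, (a i) ^ 2) = 0 then C * a t
       else min ((a t) ^ 2 / Real.sqrt (∑ i ∈ Finset.range t, (a i) ^ 2)) (C * a t))
    ≤ 3.5 * C * ((Finset.range T).sup' (Finset.nonempty_range_iff.mpr hT.ne') a)
      + 3.5 * Real.sqrt (∑ t ∈ Finset.range T, (a t) ^ 2) := by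
  set q := Real.sqrt 2 with hq
  have hq0 : (0:ℝ) ≤ q := Real.sqrt_nonneg 2
  have hq2 : q^2 = 2 := Real.sq_sqrt (by norm_num)
  have hq1 : (1:ℝ) ≤ q := by nlinarith
  have hq15 : q ≤ 1.5 := by nlinarith
  set S : ℕ → ℝ := fun t => ∑ i ∈ Finset.range t, (a i)^2 with hSdef
  set M := (Finset.range T).sup' (Finset.nonempty_range_iff.mpr hT.ne') a with hMdef
  have hS0 : ∀ t, 0 ≤ S t := fun t => Finset.sum_nonneg fun i _ => sq_nonneg _
  have hSsucc : ∀ t, S (t+1) = S t + (a t)^2 := fun t => Finset.sum_range_succ _ t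
  have hSzero : S 0 = 0 := Finset.sum_range_zero _
  have hSmono : ∀ t, S t ≤ S (t+1) := fun t => by
    rw [hSsucc]; nlinarith [sq_nonneg (a t)]
  have hM : ∀ t, t < T → a t ≤ M := fun t ht => Finset.le_sup' a (Finset.mem_range.mpr ht)
  have hM0 : 0 ≤ M := le_trans (ha 0) (hM 0 hT)
  show ∑ t ∈ Finset.range T,
      (if S t = 0 then C * a t else min ((a t)^2 / Real.sqrt (S t)) (C * a t))
    ≤ 3.5 * C * M + 3.5 * Real.sqrt (S T)
  clear_value S M
  have hsqrt2M : Real.sqrt (2*M^2) = q * M := by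
    rw [Real.sqrt_mul (by norm_num) (M^2), Real.sqrt_sq hM0, hq]
  -- key algebraic inequality
  have key : ∀ s b : ℝ, 0 ≤ s → s ≤ b →
      (1+q)*s + b ≤ (1+q) * Real.sqrt (s^2 + b^2) := by
    intro s b hs hsb
    have hb : 0 ≤ b := hs.trans hsb
    have hr0 : 0 ≤ Real.sqrt (s^2+b^2) := Real.sqrt_nonneg _
    have hr2 : (Real.sqrt (s^2+b^2))^2 = s^2+b^2 := Real.sq_sqrt (by positivity)
    set r := Real.sqrt (s^2+b^2) with hrdef
    have hsq : ((1+q)*s+b)^2 ≤ ((1+q)*r)^2 := by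
      nlinarith [mul_nonneg hb (sub_nonneg.2 hsb)]
    exact le_of_pow_le_pow_left₀ two_ne_zero (by positivity) hsq
  -- bad-times sum bound
  have claim : ∀ n, n ≤ T →
      (∑ t ∈ Finset.range n, if S t ≤ (a t)^2 then a t else 0)
        ≤ (1+q) * Real.sqrt (min (S n) (2*M^2)) := by
    intro n
    induction n with
    | zero => intro _; simp; positivity
    | succ n ih =>
      intro hn
      have hnT : n < T := hn
      have ih' := ih (Nat.le_of_lt hnT)
      rw [Finset.sum_range_succ]
      by_cases hbad : S n ≤ (a n)^2
      · rw [if_pos hbad]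
        by_cases hcase : S (n+1) ≤ 2*M^2
        · have hminn : min (S n) (2*M^2) = S n :=
            min_eq_left ((hSmono n).trans hcase)
          have hmins : min (S (n+1)) (2*M^2) = S (n+1) := min_eq_left hcase
          rw [hmins]
          rw [hminn] at ih'
          have hsb : Real.sqrt (S n) ≤ a n := by
            have := Real.sqrt_le_sqrt hbad
            rwa [Real.sqrt_sq (ha n)] at this
          have hk := key (Real.sqrt (S n)) (a n) (Real.sqrt_nonneg _) hsb
          rw [Real.sq_sqrt (hS0 n), ← hSsucc n] at hk
          linarith
        · have hmins : min (S (n+1)) (2*M^2) = 2*M^2 :=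
            min_eq_right (le_of_not_ge hcase)
          rw [hmins, hsqrt2M]
          have hBn : (∑ t ∈ Finset.range n, if S t ≤ (a t)^2 then a t else 0)
              ≤ (1+q) * a n := by
            refine ih'.trans ?_
            have h3 : Real.sqrt (min (S n) (2*M^2)) ≤ a n := by
              have hle : min (S n) (2*M^2) ≤ (a n)^2 := (min_le_left _ _).trans hbad
              have := Real.sqrt_le_sqrt hle
              rwa [Real.sqrt_sq (ha n)] at this
            nlinarith [Real.sqrt_nonneg (min (S n) (2*M^2))]
          have han : a n ≤ M := hM n hnT
          nlinarith
      · rw [if_neg hbad, add_zero]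
        refine ih'.trans ?_
        have hmin : min (S n) (2*M^2) ≤ min (S (n+1)) (2*M^2) :=
          min_le_min (hSmono n) le_rfl
        exact mul_le_mul_of_nonneg_left (Real.sqrt_le_sqrt hmin) (by positivity)
  -- termwise bound
  have hterm : ∀ t ∈ Finset.range T,
      (if S t = 0 then C * a t else min ((a t)^2 / Real.sqrt (S t)) (C * a t))
        ≤ (if S t ≤ (a t)^2 then C * a t else 0)
          + (if S t ≤ (a t)^2 then 0 else (2*q) * (Real.sqrt (S (t+1)) - Real.sqrt (S t))) := by
    intro t _
    by_cases hbad : S t ≤ (a t)^2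
    · rw [if_pos hbad, if_pos hbad, add_zero]
      by_cases h0 : S t = 0
      · rw [if_pos h0]
      · rw [if_neg h0]; exact min_le_right _ _
    · rw [if_neg hbad, if_neg hbad, zero_add]
      push_neg at hbad
      have hSt : 0 < S t := lt_of_le_of_lt (sq_nonneg _) hbad
      rw [if_neg hSt.ne']
      refine (min_le_left _ _).trans ?_
      have hrq : Real.sqrt (S (t+1)) ≤ q * Real.sqrt (S t) := by
        have h1 : S (t+1) ≤ 2 * S t := by rw [hSsucc]; linarith
        have h2 := Real.sqrt_le_sqrt h1
        rwa [Real.sqrt_mul (by norm_num) (S t), ← hq] at h2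
      set s := Real.sqrt (S t) with hsdef
      set r := Real.sqrt (S (t+1)) with hrdef
      have hs0 : 0 < s := Real.sqrt_pos.mpr hSt
      have hs2 : s^2 = S t := Real.sq_sqrt hSt.le
      have hr2 : r^2 = S (t+1) := Real.sq_sqrt (hS0 _)
      have hr0 : 0 ≤ r := Real.sqrt_nonneg _
      have hsr : s ≤ r := Real.sqrt_le_sqrt (hSmono t)
      rw [div_le_iff₀ hs0]
      nlinarith [hSsucc t, mul_nonneg (sub_nonneg.2 hsr) hs0.le,
        mul_nonneg (sub_nonneg.2 hsr) (sub_nonneg.2 (hs0.le.trans hsr))]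
  calc ∑ t ∈ Finset.range T,
      (if S t = 0 then C * a t else min ((a t)^2 / Real.sqrt (S t)) (C * a t))
      ≤ ∑ t ∈ Finset.range T,
        ((if S t ≤ (a t)^2 then C * a t else 0)
          + (if S t ≤ (a t)^2 then 0 else (2*q) * (Real.sqrt (S (t+1)) - Real.sqrt (S t)))) :=
        Finset.sum_le_sum hterm
    _ = (∑ t ∈ Finset.range T, (if S t ≤ (a t)^2 then C * a t else 0))
        + ∑ t ∈ Finset.range T,
          (if S t ≤ (a t)^2 then 0 else (2*q) * (Real.sqrt (S (t+1)) - Real.sqrt (S t))) :=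
        Finset.sum_add_distrib
    _ ≤ 3.5 * C * M + 3.5 * Real.sqrt (S T) := by
        have h1 : (∑ t ∈ Finset.range T, (if S t ≤ (a t)^2 then C * a t else 0))
            ≤ 3.5 * C * M := by
          have e1 : (∑ t ∈ Finset.range T, (if S t ≤ (a t)^2 then C * a t else 0))
              = C * ∑ t ∈ Finset.range T, (if S t ≤ (a t)^2 then a t else 0) := by
            rw [Finset.mul_sum]
            exact Finset.sum_congr rfl fun t _ => by split <;> simp
          rw [e1]
          have h2 := claim T le_rfl
          have h3 : Real.sqrt (min (S T) (2*M^2)) ≤ q * M := by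
            have h4 := Real.sqrt_le_sqrt (min_le_right (S T) (2*M^2))
            rwa [hsqrt2M] at h4
          have hsum0 : 0 ≤ ∑ t ∈ Finset.range T, (if S t ≤ (a t)^2 then a t else 0) :=
            Finset.sum_nonneg fun t _ => by split <;> [exact ha t; exact le_rfl]
          have h5 : (∑ t ∈ Finset.range T, (if S t ≤ (a t)^2 then a t else 0)) ≤ 3.5 * M := by
            nlinarith [Real.sqrt_nonneg (min (S T) (2*M^2))]
          nlinarith
        have h2 : (∑ t ∈ Finset.range T,
            (if S t ≤ (a t)^2 then 0 else (2*q) * (Real.sqrt (S (t+1)) - Real.sqrt (S t))))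
            ≤ 3.5 * Real.sqrt (S T) := by
          have hdel : ∀ t, 0 ≤ Real.sqrt (S (t+1)) - Real.sqrt (S t) := fun t =>
            sub_nonneg.2 (Real.sqrt_le_sqrt (hSmono t))
          calc (∑ t ∈ Finset.range T,
              (if S t ≤ (a t)^2 then 0 else (2*q) * (Real.sqrt (S (t+1)) - Real.sqrt (S t))))
              ≤ ∑ t ∈ Finset.range T, (2*q) * (Real.sqrt (S (t+1)) - Real.sqrt (S t)) := by
                refine Finset.sum_le_sum fun t _ => ?_
                split
                · exact mul_nonneg (by positivity) (hdel t)
                · exact le_rfl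
            _ = (2*q) * (Real.sqrt (S T) - Real.sqrt (S 0)) := by
                rw [← Finset.mul_sum, Finset.sum_range_sub (fun t => Real.sqrt (S t))]
            _ ≤ 3.5 * Real.sqrt (S T) := by
                rw [hSzero, Real.sqrt_zero]
                nlinarith [Real.sqrt_nonneg (S T)]
        linarith
end

section
/- Let {a_t} be a sequence of nonnegative reals and {Delta_t} a sequence of nonnegative reals with Delta_0 = 0 and Delta_t <= Delta_{t-1} + min(a_t, a_t^2 / Delta_{t-1}) for all t >= 1 (with the convention that when Delta_{t-1} = 0 the bound is Delta_t <= a_t). Then for all T >= 0, Delta_T <= sqrt(3 * sum_{t=1}^T a_t^2). -/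
open Finset

/-- Lemma 5 (Solution of the AdaFTRL Recurrence): if `Δ_0 = 0` and
`Δ_t ≤ Δ_{t-1} + min(a_t, a_t² / Δ_{t-1})` (with the term interpreted as `a_t`
when `Δ_{t-1} = 0`), then `Δ_T ≤ √(3 ∑_{t=1}^T a_t²)`. -/
theorem recurrence_solution (a Δ : ℕ → ℝ) (ha : ∀ t, 0 ≤ a t) (hΔ : ∀ t, 0 ≤ Δ t)
    (h0 : Δ 0 = 0)
    (hrec : ∀ t : ℕ, Δ (t + 1) ≤ Δ t +
      (if Δ t = 0 then a (t + 1) else min (a (t + 1)) ((a (t + 1)) ^ 2 / Δ t))) :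
    ∀ T : ℕ, Δ T ≤ Real.sqrt (3 * ∑ t ∈ Finset.Icc 1 T, (a t) ^ 2) := by
  have key : ∀ T : ℕ, (Δ T) ^ 2 ≤ 3 * ∑ t ∈ Finset.Icc 1 T, (a t) ^ 2 := by
    intro T
    induction T with
    | zero => simp [h0]
    | succ n ih =>
      have hS : ∑ t ∈ Finset.Icc 1 (n + 1), (a t) ^ 2
          = (∑ t ∈ Finset.Icc 1 n, (a t) ^ 2) + (a (n + 1)) ^ 2 := by
        rw [Finset.sum_Icc_succ_top (by omega)]
      rw [hS]
      by_cases h : Δ n = 0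
      · have hr := hrec n
        rw [h, if_pos rfl] at hr
        simp only [zero_add] at hr
        have hsum : 0 ≤ ∑ t ∈ Finset.Icc 1 n, (a t) ^ 2 :=
          Finset.sum_nonneg fun t _ => sq_nonneg (a t)
        nlinarith [hΔ (n + 1), ha (n + 1)]
      · have hr := hrec n
        rw [if_neg h] at hr
        have hpos : 0 < Δ n := lt_of_le_of_ne (hΔ n) (Ne.symm h)
        have h1 : min (a (n + 1)) ((a (n + 1)) ^ 2 / Δ n) ≤ (a (n + 1)) ^ 2 / Δ n :=
          min_le_right _ _
        have h2 : min (a (n + 1)) ((a (n + 1)) ^ 2 / Δ n) ≤ a (n + 1) := min_le_left _ _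
        have h3 : 0 ≤ min (a (n + 1)) ((a (n + 1)) ^ 2 / Δ n) :=
          le_min (ha _) (div_nonneg (sq_nonneg _) hpos.le)
        have hdiv : Δ n * ((a (n + 1)) ^ 2 / Δ n) = (a (n + 1)) ^ 2 := by
          field_simp
        nlinarith [hΔ (n + 1), ha (n + 1), mul_le_mul_of_nonneg_left h1 hpos.le]
  intro T
  calc Δ T ≤ Real.sqrt ((Δ T) ^ 2) := by rw [Real.sqrt_sq (hΔ T)]
    _ ≤ _ := Real.sqrt_le_sqrt (key T)
end

section
/- Let f : K -> R be lambda-strongly convex (lambda > 0) and lower semi-continuous on a nonempty closed convex set K in a finite-dimensional normed space, and let f* be its Fenchel conjugate f*(l) = sup_{w in K} (<l, w> - f(w)). Then f* is (1/lambda)-strongly smooth: for all x, y in the dual space, B_{f*}(x, y) <= (1/(2*lambda)) * ||x - y||_*^2, where B_{f*} is the Bregman divergence of f*. -/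
/-- Property 4 of Proposition 2: the Fenchel conjugate (over `K`) of a `λ`-strongly convex
lower semicontinuous function is `1/λ`-strongly smooth:
`B_{f*}(x,y) ≤ ‖x - y‖_*² / (2λ)`, where `∇f*(y)` is the argmin of `f - y` over `K`. -/
theorem conjugate_strongly_smooth {E : Type*} [NormedAddCommGroup E] [NormedSpace ℝ E]
    [FiniteDimensional ℝ E]
    (K : Set E) (hKne : K.Nonempty) (hKcl : IsClosed K) (hKconv : Convex ℝ K)
    (lam : ℝ) (hlam : 0 < lam)
    (f : E → ℝ) (hsc : StrongConvexOn K lam f) (hlsc : LowerSemicontinuousOn f K)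
    (fstar : (E →L[ℝ] ℝ) → ℝ)
    (hfstar : ∀ l : E →L[ℝ] ℝ, fstar l = sSup ((fun w => l w - f w) '' K))
    (g : (E →L[ℝ] ℝ) → E)
    (hgmem : ∀ l, g l ∈ K)
    (hgmin : ∀ l : E →L[ℝ] ℝ, ∀ w ∈ K, f (g l) - l (g l) ≤ f w - l w)
    (x y : E →L[ℝ] ℝ) :
    fstar x - fstar y - (x - y) (g y) ≤ ‖x - y‖ ^ 2 / (2 * lam) := by
  set p := g y with hp
  -- quadratic growth of f - y at its minimizer p
  have key : ∀ w ∈ K, f p - y p + lam / 2 * ‖w - p‖ ^ 2 ≤ f w - y w := by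
    intro w hw
    set d : ℝ := ‖w - p‖ with hd
    have step : ∀ t ∈ Set.Ioo (0:ℝ) 1,
        (1 - t) * (lam / 2 * d ^ 2) ≤ (f w - y w) - (f p - y p) := by
      intro t ht
      obtain ⟨ht0, ht1⟩ := ht
      have hz : t • w + (1 - t) • p ∈ K :=
        hKconv hw (hgmem y) ht0.le (by linarith) (by ring)
      have h1 : f (t • w + (1 - t) • p) ≤
          t • f w + (1 - t) • f p - t * (1 - t) * (lam / 2 * ‖w - p‖ ^ 2) :=
        hsc.2 hw (hgmem y) ht0.le (by linarith) (by ring)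
      have h2 : f p - y p ≤ f (t • w + (1 - t) • p) - y (t • w + (1 - t) • p) :=
        hgmin y _ hz
      have h3 : y (t • w + (1 - t) • p) = t * y w + (1 - t) * y p := by
        simp [map_add, map_smul, smul_eq_mul]
      rw [h3] at h2
      have h4 : t * ((1 - t) * (lam / 2 * d ^ 2)) ≤ t * ((f w - y w) - (f p - y p)) := by
        simp only [smul_eq_mul] at h1
        nlinarith [h1, h2]
      exact le_of_mul_le_mul_left (by linarith [h4]) ht0
    have hlim : Filter.Tendsto (fun t : ℝ => (1 - t) * (lam / 2 * d ^ 2))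
        (nhdsWithin 0 (Set.Ioi 0)) (nhds (lam / 2 * d ^ 2)) := by
      have : Continuous (fun t : ℝ => (1 - t) * (lam / 2 * d ^ 2)) := by continuity
      have h := this.tendsto 0
      simp only [sub_zero, one_mul] at h
      exact h.mono_left nhdsWithin_le_nhds
    have hge : lam / 2 * d ^ 2 ≤ (f w - y w) - (f p - y p) := by
      refine le_of_tendsto hlim ?_
      filter_upwards [Ioo_mem_nhdsGT_of_mem (by norm_num : (0:ℝ) ∈ Set.Ico (0:ℝ) 1)] with t ht
      exact step t ht
    linarith
  -- fstar y equals value at the minimizer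
  have hybdd : ∀ r ∈ (fun w => y w - f w) '' K, r ≤ y p - f p := by
    rintro r ⟨w, hw, rfl⟩
    have := hgmin y w hw
    simp only [← hp] at this
    show y w - f w ≤ y p - f p
    linarith
  have hyeq : fstar y = y p - f p := by
    rw [hfstar]
    refine le_antisymm (csSup_le (hKne.image _) hybdd) ?_
    exact le_csSup ⟨y p - f p, hybdd⟩ ⟨p, hgmem y, rfl⟩
  -- bound fstar x
  have hxle : fstar x ≤ fstar y + (x - y) p + ‖x - y‖ ^ 2 / (2 * lam) := by
    rw [hfstar]
    refine csSup_le (hKne.image _) ?_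
    rintro r ⟨w, hw, rfl⟩
    have hkey := key w hw
    have hdual : (x - y) (w - p) ≤ ‖x - y‖ * ‖w - p‖ :=
      le_trans (le_abs_self _) ((x - y).le_opNorm _)
    have hsplit : (x - y) (w - p) = (x w - y w) - (x p - y p) := by
      simp [map_sub, ContinuousLinearMap.sub_apply]
    have hquad : ‖x - y‖ * ‖w - p‖ - lam / 2 * ‖w - p‖ ^ 2 ≤ ‖x - y‖ ^ 2 / (2 * lam) := by
      rw [le_div_iff₀ (by positivity)]
      nlinarith [sq_nonneg (‖x - y‖ - lam * ‖w - p‖)]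
    have hxy : (x - y) p = x p - y p := by simp [ContinuousLinearMap.sub_apply]
    rw [hyeq, hxy]
    have : x w - y w ≤ x p - y p + ‖x - y‖ * ‖w - p‖ := by
      rw [← sub_le_iff_le_add']
      rw [← hsplit]
      exact hdual
    nlinarith [hkey, hdual, hsplit, hquad]
  linarith
end

section
/- Let f : K -> R be lambda-strongly convex and lower semi-continuous on a nonempty closed convex set K with diameter D = sup_{u,v in K}||u - v||. Then the Bregman divergence of the Fenchel conjugate satisfies B_{f*}(x, y) <= D * ||x - y||_* for all x, y in the dual space. -/
/-- Property 6 of Proposition 2: for `f` `λ`-strongly convex and lower semicontinuous on a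
nonempty closed convex set `K` with diameter `D`, the Bregman divergence of the Fenchel
conjugate satisfies `B_{f*}(x,y) ≤ D ‖x - y‖_*`. -/
theorem conjugate_bregman_le_diam {E : Type*} [NormedAddCommGroup E] [NormedSpace ℝ E]
    [FiniteDimensional ℝ E]
    (K : Set E) (hKne : K.Nonempty) (hKcl : IsClosed K) (hKconv : Convex ℝ K)
    (D : ℝ) (hD : ∀ u ∈ K, ∀ v ∈ K, ‖u - v‖ ≤ D)
    (lam : ℝ) (hlam : 0 < lam)
    (f : E → ℝ) (hsc : StrongConvexOn K lam f) (hlsc : LowerSemicontinuousOn f K)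
    (fstar : (E →L[ℝ] ℝ) → ℝ)
    (hfstar : ∀ l : E →L[ℝ] ℝ, fstar l = sSup ((fun w => l w - f w) '' K))
    (g : (E →L[ℝ] ℝ) → E)
    (hgmem : ∀ l, g l ∈ K)
    (hgmin : ∀ l : E →L[ℝ] ℝ, ∀ w ∈ K, f (g l) - l (g l) ≤ f w - l w)
    (x y : E →L[ℝ] ℝ) :
    fstar x - fstar y - (x - y) (g y) ≤ D * ‖x - y‖ := by
  have hfy : fstar y = y (g y) - f (g y) := by
    rw [hfstar y]
    apply le_antisymm
    · apply csSup_le ((hKne.image _))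
      rintro _ ⟨w, hw, rfl⟩
      have := hgmin y w hw
      show y w - f w ≤ _
      linarith
    · exact le_csSup ⟨y (g y) - f (g y), by rintro _ ⟨w, hw, rfl⟩; have := hgmin y w hw; show y w - f w ≤ _; linarith⟩
        ⟨g y, hgmem y, rfl⟩
  have hfx : fstar x ≤ x (g y) - f (g y) + D * ‖x - y‖ := by
    rw [hfstar x]
    apply csSup_le (hKne.image _)
    rintro _ ⟨w, hw, rfl⟩
    have h1 := hgmin y w hw
    have h2 : (x - y) (w - g y) ≤ ‖x - y‖ * ‖w - g y‖ :=
      le_trans (le_abs_self _) ((x - y).le_opNorm _)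
    have h3 : ‖w - g y‖ ≤ D := hD w hw (g y) (hgmem y)
    have h4 : ‖x - y‖ * ‖w - g y‖ ≤ ‖x - y‖ * D :=
      mul_le_mul_of_nonneg_left h3 (norm_nonneg _)
    simp only [ContinuousLinearMap.sub_apply, map_sub] at h2
    show x w - f w ≤ _
    nlinarith [norm_nonneg (x - y)]
  have hxy : (x - y) (g y) = x (g y) - y (g y) := rfl
  linarith
end

section
/- Consider the FTRL algorithm on a nonempty closed convex set K which at round t plays w_t = argmin_{w in K}(<L_{t-1}, w> + R_t(w)) where L_t = l_1 + ... + l_t and each R_t : K -> R is strongly convex and lower semi-continuous. Then for any u in K, the regret sum_{t=1}^T <l_t, w_t - u> is at most R_{T+1}(u) + R_1*(0) + sum_{t=1}^T [B_{R_t*}(-L_t, -L_{t-1}) - R_t*(-L_t) + R_{t+1}*(-L_t)]. -/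
open Finset

private lemma telescope_aux (f : ℕ → ℝ) (T : ℕ) :
    ∑ t ∈ Finset.Icc 1 T, (f (t + 1) - f t) = f (T + 1) - f 1 := by
  induction T with
  | zero => simp
  | succ n ih => rw [Finset.sum_Icc_succ_top (by omega), ih]; ring

/-- Lemma 3 (Regret of FTRL with varying regularizers): with `w_t` the FTRL minimizer of
`⟨L_{t-1}, ·⟩ + R_t` over `K`, `L_t = ℓ_1 + … + ℓ_t`, and `R_t` strongly convex lower
semicontinuous regularizers, the regret against any `u ∈ K` is bounded by
`R_{T+1}(u) + R_1*(0) + ∑_{t=1}^T [B_{R_t*}(-L_t, -L_{t-1}) - R_t*(-L_t) + R_{t+1}*(-L_t)]`,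
where `R_t*` is the Fenchel conjugate over `K` and `∇R_t*(-L_{t-1}) = w_t`. -/
theorem ftrl_regret {E : Type*} [NormedAddCommGroup E] [NormedSpace ℝ E]
    [FiniteDimensional ℝ E]
    (K : Set E) (hKne : K.Nonempty) (hKcl : IsClosed K) (hKconv : Convex ℝ K)
    (T : ℕ) (ℓ : ℕ → (E →L[ℝ] ℝ))
    (L : ℕ → (E →L[ℝ] ℝ)) (hL : ∀ t, L t = ∑ i ∈ Finset.Icc 1 t, ℓ i)
    (R : ℕ → E → ℝ)
    (hsc : ∀ t, ∃ lam > (0:ℝ), StrongConvexOn K lam (R t))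
    (hlsc : ∀ t, LowerSemicontinuousOn (R t) K)
    (Rstar : ℕ → (E →L[ℝ] ℝ) → ℝ)
    (hRstar : ∀ t (l : E →L[ℝ] ℝ), Rstar t l = sSup ((fun w => l w - R t w) '' K))
    (w : ℕ → E)
    (hwmem : ∀ t, w t ∈ K)
    (hwmin : ∀ t ≥ 1, ∀ v ∈ K,
      (L (t - 1)) (w t) + R t (w t) ≤ (L (t - 1)) v + R t v)
    (u : E) (hu : u ∈ K) :
    ∑ t ∈ Finset.Icc 1 T, (ℓ t) (w t - u)
      ≤ R (T + 1) u + Rstar 1 0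
        + ∑ t ∈ Finset.Icc 1 T,
            ((Rstar t (-(L t)) - Rstar t (-(L (t - 1)))
              - ((-(L t)) - (-(L (t - 1)))) (w t))
             - Rstar t (-(L t)) + Rstar (t + 1) (-(L t))) := by
  have hL0 : L 0 = 0 := by rw [hL]; simp
  -- step relation L t = L (t-1) + ℓ t for t ≥ 1
  have hLstep : ∀ t : ℕ, 1 ≤ t → L t = L (t - 1) + ℓ t := by
    intro t ht
    obtain ⟨s, rfl⟩ : ∃ s, t = s + 1 := ⟨t - 1, by omega⟩
    rw [hL, hL]
    simp only [Nat.add_sub_cancel]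
    rw [Finset.sum_Icc_succ_top (by omega)]
  -- the key inequality at time T+1
  have hT1 : -(L T) u - R (T + 1) u ≤ Rstar (T + 1) (-(L T)) := by
    rw [hRstar]
    have hmin := hwmin (T + 1) (by omega)
    simp only [Nat.add_sub_cancel] at hmin
    apply le_csSup
    · refine ⟨(-(L T)) (w (T + 1)) - R (T + 1) (w (T + 1)), ?_⟩
      rintro x ⟨v, hv, rfl⟩
      have := hmin v hv
      simp only [ContinuousLinearMap.neg_apply]
      linarith
    · exact ⟨u, hu, by simp⟩
  -- rewrite LHS
  have hLHS : ∑ t ∈ Finset.Icc 1 T, (ℓ t) (w t - u)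
      = (∑ t ∈ Finset.Icc 1 T, (ℓ t) (w t)) - (L T) u := by
    rw [hL]
    rw [ContinuousLinearMap.sum_apply, ← Finset.sum_sub_distrib]
    exact Finset.sum_congr rfl fun t _ => by rw [map_sub]
  -- rewrite RHS sum
  set f : ℕ → ℝ := fun t => Rstar t (-(L (t - 1))) with hf
  have hterm : ∀ t ∈ Finset.Icc 1 T,
      ((Rstar t (-(L t)) - Rstar t (-(L (t - 1)))
        - ((-(L t)) - (-(L (t - 1)))) (w t))
       - Rstar t (-(L t)) + Rstar (t + 1) (-(L t)))
      = (ℓ t) (w t) + (f (t + 1) - f t) := by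
    intro t ht
    simp only [Finset.mem_Icc] at ht
    have hstep := hLstep t ht.1
    have happ : ((-(L t)) - (-(L (t - 1)))) (w t) = -(ℓ t) (w t) := by
      rw [hstep]; simp
    rw [happ]
    simp only [hf, Nat.add_sub_cancel]
    ring
  rw [Finset.sum_congr rfl hterm, Finset.sum_add_distrib, telescope_aux, hLHS]
  have hf1 : f 1 = Rstar 1 0 := by simp [hf, hL0]
  have hfT : f (T + 1) = Rstar (T + 1) (-(L T)) := by simp [hf]
  rw [hf1, hfT]
  linarith
end

section
/- For d >= 2 and the sequence of T >= 120 loss vectors consisting of ceil(T/3) copies of -e_1 followed by floor(2T/3) copies of -e_2, the exponentiated-gradient iterates w_t with per-round learning rate 1/sqrt(t) on the probability simplex satisfy w_{t,2} <= 1/5 for all t >= ceil(T/3) + 1, where w_{t,j} is proportional to exp(-sum_{i=1}^{t-1} l_{i,j}/sqrt(i)). -/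
open Finset

lemma sum_rsqrt_lb (n : ℕ) :
    2 * (Real.sqrt (n + 1) - 1) ≤ ∑ i ∈ Finset.Icc 1 n, 1 / Real.sqrt i := by
  induction n with
  | zero => simp
  | succ n ih =>
    rw [Finset.sum_Icc_succ_top (by omega)]
    have key : 2 * (Real.sqrt ((n:ℝ) + 1 + 1) - Real.sqrt ((n:ℝ) + 1))
        ≤ 1 / Real.sqrt ((n:ℝ) + 1) := by
      have ha : (0:ℝ) < Real.sqrt ((n:ℝ) + 1) := Real.sqrt_pos.mpr (by positivity)
      rw [le_div_iff₀ ha]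
      have h1 : Real.sqrt ((n:ℝ)+1) ^ 2 = (n:ℝ) + 1 := Real.sq_sqrt (by positivity)
      have h2 : Real.sqrt ((n:ℝ)+1+1) ^ 2 = (n:ℝ) + 1 + 1 := Real.sq_sqrt (by positivity)
      nlinarith [sq_nonneg (Real.sqrt ((n:ℝ)+1+1) - Real.sqrt ((n:ℝ)+1))]
    push_cast at *
    linarith

lemma sum_rsqrt_ub (m : ℕ) : ∀ n, m ≤ n →
    ∑ i ∈ Finset.Icc (m + 1) n, 1 / Real.sqrt i ≤ 2 * (Real.sqrt n - Real.sqrt m) := by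
  intro n
  induction n with
  | zero => intro h; interval_cases m; simp
  | succ n ih =>
    intro h
    rcases Nat.eq_or_lt_of_le h with h' | h'
    · rw [Finset.Icc_eq_empty (by omega), h']
      simp
    · have hmn : m ≤ n := by omega
      rw [Finset.sum_Icc_succ_top (by omega)]
      have key : 1 / Real.sqrt ((n:ℝ) + 1) ≤ 2 * (Real.sqrt ((n:ℝ) + 1) - Real.sqrt (n:ℝ)) := by
        have ha : (0:ℝ) < Real.sqrt ((n:ℝ) + 1) := Real.sqrt_pos.mpr (by positivity)
        rw [div_le_iff₀ ha]
        have h1 : Real.sqrt ((n:ℝ)+1) ^ 2 = (n:ℝ) + 1 := Real.sq_sqrt (by positivity)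
        have h2 : Real.sqrt (n:ℝ) ^ 2 = (n:ℝ) := Real.sq_sqrt (by positivity)
        nlinarith [sq_nonneg (Real.sqrt ((n:ℝ)+1) - Real.sqrt (n:ℝ))]
      have := ih hmn
      push_cast at *
      linarith

lemma eg_numeric (c T : ℕ) (hc40 : 40 ≤ c) (hT3 : T ≤ 3 * c) :
    (3:ℝ)/2 ≤ 2 * Real.sqrt ((c:ℝ) + 1) + 2 * Real.sqrt (c:ℝ)
      - 2 * Real.sqrt ((T:ℝ) - 1) - 2 := by
  set x := Real.sqrt ((c:ℝ) + 1) with hx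
  set y := Real.sqrt (c:ℝ) with hy
  set z := Real.sqrt ((T:ℝ) - 1) with hz
  have hx2 : x ^ 2 = (c:ℝ) + 1 := Real.sq_sqrt (by positivity)
  have hy2 : y ^ 2 = (c:ℝ) := Real.sq_sqrt (by positivity)
  have hxn : 0 ≤ x := Real.sqrt_nonneg _
  have hyn : 0 ≤ y := Real.sqrt_nonneg _
  have hzn : 0 ≤ z := Real.sqrt_nonneg _
  have hc' : (40:ℝ) ≤ (c:ℝ) := by exact_mod_cast hc40
  have hT' : (T:ℝ) ≤ 3 * (c:ℝ) := by exact_mod_cast hT3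
  have hz2 : z ^ 2 ≤ 3 * (c:ℝ) - 1 := by
    rw [hz]
    rcases le_or_gt ((T:ℝ) - 1) 0 with h | h
    · rw [Real.sqrt_eq_zero_of_nonpos h]; nlinarith
    · rw [Real.sq_sqrt h.le]; linarith
  have hyx : y ≤ x := Real.sqrt_le_sqrt (by linarith)
  have h14 : 14 * z ≤ 4 * (c:ℝ) - 17/4 := by
    nlinarith [sq_nonneg (14 * z - (4 * (c:ℝ) - 17/4))]
  have h1 : (2*x + 2*y)^2 ≥ 16 * (c:ℝ) + 4 := by
    nlinarith [mul_le_mul_of_nonneg_left hyx hyn]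
  have h3 : (2*z + 7/2)^2 ≤ 16 * (c:ℝ) + 4 := by nlinarith
  have : 2*z + 7/2 ≤ 2*x + 2*y := by
    have := (pow_le_pow_iff_left₀ (by linarith) (by linarith) (two_ne_zero)).mp
      (le_trans h3 h1)
    linarith
  linarith

/-- Key step in the second Mirror Descent counter-example: for the sequence of losses
consisting of `⌈T/3⌉` copies of `-e_1` followed by copies of `-e_2`, the
exponentiated-gradient (multiplicative weights) iterates on the probability simplex with
learning rates `1/√t` satisfy `w_{t,2} ≤ 1/5` for all `⌈T/3⌉ + 1 ≤ t ≤ T` when `T ≥ 120`. -/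
theorem eg_second_coordinate_small (d T : ℕ) (hd : 2 ≤ d) (hT : 120 ≤ T)
    (c : ℕ) (hc : c = (T + 2) / 3)  -- `c = ⌈T/3⌉`
    (ℓ : ℕ → ℕ → ℝ)
    (hℓ : ∀ i j, ℓ i j =
      if j = 1 ∧ i ≤ c then (-1 : ℝ) else if j = 2 ∧ c < i then (-1 : ℝ) else 0)
    (w : ℕ → ℕ → ℝ)
    (hw : ∀ t j, w t j =
      Real.exp (-∑ i ∈ Finset.Icc 1 (t - 1), ℓ i j / Real.sqrt i)
        / ∑ k ∈ Finset.Icc 1 d,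
            Real.exp (-∑ i ∈ Finset.Icc 1 (t - 1), ℓ i k / Real.sqrt i))
    (t : ℕ) (ht1 : c + 1 ≤ t) (ht2 : t ≤ T) :
    w t 2 ≤ 1 / 5 := by
  have hc40 : 40 ≤ c := by omega
  have hT3 : T ≤ 3 * c := by omega
  have hct : c ≤ t - 1 := by omega
  have hsplit : ∀ f : ℕ → ℝ, ∑ i ∈ Finset.Icc 1 (t-1), f i
      = ∑ i ∈ Finset.Icc 1 c, f i + ∑ i ∈ Finset.Icc (c+1) (t-1), f i := by
    intro f
    rw [Finset.Icc_add_one_left_eq_Ioc c (t-1), show Finset.Icc 1 c = Finset.Ioc 0 c from rfl,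
      show Finset.Icc 1 (t-1) = Finset.Ioc 0 (t-1) from rfl]
    exact (Finset.sum_Ioc_consecutive f (Nat.zero_le c) hct).symm
  set A := ∑ i ∈ Finset.Icc 1 c, 1 / Real.sqrt i with hA
  set B := ∑ i ∈ Finset.Icc (c+1) (t-1), 1 / Real.sqrt i with hB
  have hS1 : ∑ i ∈ Finset.Icc 1 (t - 1), ℓ i 1 / Real.sqrt i = -A := by
    rw [hsplit]
    have e1 : ∑ i ∈ Finset.Icc 1 c, ℓ i 1 / Real.sqrt i = -A := by
      rw [hA, ← Finset.sum_neg_distrib]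
      refine Finset.sum_congr rfl fun i hi => ?_
      rw [hℓ]
      simp only [Finset.mem_Icc] at hi
      rw [if_pos ⟨rfl, hi.2⟩]
      ring
    have e2 : ∑ i ∈ Finset.Icc (c+1) (t-1), ℓ i 1 / Real.sqrt i = 0 := by
      refine Finset.sum_eq_zero fun i hi => ?_
      rw [hℓ]
      simp only [Finset.mem_Icc] at hi
      rw [if_neg (by omega), if_neg (by norm_num)]
      ring
    rw [e1, e2]; ring
  have hS2 : ∑ i ∈ Finset.Icc 1 (t - 1), ℓ i 2 / Real.sqrt i = -B := by
    rw [hsplit]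
    have e1 : ∑ i ∈ Finset.Icc 1 c, ℓ i 2 / Real.sqrt i = 0 := by
      refine Finset.sum_eq_zero fun i hi => ?_
      rw [hℓ]
      simp only [Finset.mem_Icc] at hi
      rw [if_neg (by norm_num), if_neg (by omega)]
      ring
    have e2 : ∑ i ∈ Finset.Icc (c+1) (t-1), ℓ i 2 / Real.sqrt i = -B := by
      rw [hB, ← Finset.sum_neg_distrib]
      refine Finset.sum_congr rfl fun i hi => ?_
      rw [hℓ]
      simp only [Finset.mem_Icc] at hi
      rw [if_neg (by norm_num), if_pos ⟨rfl, by omega⟩]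
      ring
    rw [e1, e2]; ring
  have hAlb : 2 * (Real.sqrt (c + 1) - 1) ≤ A := sum_rsqrt_lb c
  have hBub : B ≤ 2 * (Real.sqrt ((T:ℝ) - 1) - Real.sqrt c) := by
    have h1 := sum_rsqrt_ub c (t-1) hct
    have h2 : Real.sqrt ((t:ℝ) - 1) ≤ Real.sqrt ((T:ℝ) - 1) := by
      apply Real.sqrt_le_sqrt
      have : (t:ℝ) ≤ (T:ℝ) := by exact_mod_cast ht2
      linarith
    have hcast : ((t - 1 : ℕ) : ℝ) = (t:ℝ) - 1 := by
      have : 1 ≤ t := by omega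
      push_cast [this]; ring
    rw [hB]
    calc B ≤ 2 * (Real.sqrt ((t-1 : ℕ):ℝ) - Real.sqrt c) := h1
      _ ≤ 2 * (Real.sqrt ((T:ℝ) - 1) - Real.sqrt c) := by
          rw [hcast]; linarith
  have hnum := eg_numeric c T hc40 hT3
  have hAB : (3:ℝ)/2 ≤ A - B := by
    push_cast at hAlb
    linarith
  have hexp4 : (4:ℝ) ≤ Real.exp (A - B) := by
    have h32 : Real.exp (3/2 : ℝ) ≤ Real.exp (A - B) := Real.exp_le_exp.mpr hAB
    have he1 : (2.7182818283 : ℝ) < Real.exp 1 := Real.exp_one_gt_d9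
    have he2 : (1 : ℝ) + 1/2 ≤ Real.exp (1/2) := by
      have := Real.add_one_le_exp (1/2 : ℝ); linarith
    have : Real.exp (3/2 : ℝ) = Real.exp 1 * Real.exp (1/2) := by
      rw [← Real.exp_add]; norm_num
    nlinarith [Real.exp_pos (1/2 : ℝ), Real.exp_pos (1:ℝ)]
  have hexpAB : 4 * Real.exp B ≤ Real.exp A := by
    have : Real.exp (A - B) * Real.exp B = Real.exp A := by
      rw [← Real.exp_add]; ring_nf
    nlinarith [Real.exp_pos B]
  set D := ∑ k ∈ Finset.Icc 1 d,
      Real.exp (-∑ i ∈ Finset.Icc 1 (t - 1), ℓ i k / Real.sqrt i) with hD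
  have hDge : Real.exp A + Real.exp B ≤ D := by
    have hsub : ({1, 2} : Finset ℕ) ⊆ Finset.Icc 1 d := by
      intro k hk
      simp only [Finset.mem_insert, Finset.mem_singleton] at hk
      simp only [Finset.mem_Icc]
      omega
    have := Finset.sum_le_sum_of_subset_of_nonneg hsub
      (fun k _ _ => (Real.exp_pos _).le)
      (f := fun k => Real.exp (-∑ i ∈ Finset.Icc 1 (t - 1), ℓ i k / Real.sqrt i))
    rw [Finset.sum_pair (by norm_num), hS1, hS2, neg_neg, neg_neg] at this
    exact this
  have hD0 : 0 < D := lt_of_lt_of_le (by positivity) hDge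
  rw [hw, hS2, neg_neg]
  rw [div_le_div_iff₀ hD0 (by norm_num)]
  nlinarith [Real.exp_pos B]
end
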